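/- Strict monotonicity of the vector field F: for every p > 1 and all u, v ∈ ℝ^N with u ≠ v, one has ⟨F(u) − F(v), u − v⟩ > 0. -/

import Mathlib

open Real

/-- Strict monotonicity of the vector field `F(v) = φ(|v|) v`. -/
theorem strict_monotonicity_F {N : ℕ} (hN : 1 ≤ N) (p c : ℝ)
    (hp : 1 < p) (hc : 0 < c) (φ φ' : ℝ → ℝ)
    (hderiv : ∀ ξ > (0 : ℝ), HasDerivAt φ (φ' ξ) ξ)
    (hderivcont : ContinuousOn φ' (Set.Ioi 0))
    (hφ : ∀ ξ > (0 : ℝ), c * ξ ^ (p - 2) ≤ φ ξ)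
    (hφ' : ∀ ξ > (0 : ℝ), c * ξ ^ (p - 2) ≤ φ ξ + ξ * φ' ξ)
    (F : EuclideanSpace ℝ (Fin N) → EuclideanSpace ℝ (Fin N))
    (hF : ∀ v : EuclideanSpace ℝ (Fin N), v ≠ 0 → F v = φ ‖v‖ • v) (hF0 : F 0 = 0) :
    ∀ u v : EuclideanSpace ℝ (Fin N), u ≠ v →
      0 < (inner ℝ (F u - F v) (u - v) : ℝ) := by
  have hpos : ∀ ξ > (0 : ℝ), 0 < φ ξ := fun ξ hξ =>
    lt_of_lt_of_le (by positivity) (hφ ξ hξ)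
  have amono : StrictMonoOn (fun t => t * φ t) (Set.Ioi 0) := by
    apply strictMonoOn_of_deriv_pos (convex_Ioi 0)
    · exact continuousOn_id.mul (fun x hx => (hderiv x hx).continuousAt.continuousWithinAt)
    · intro x hx
      rw [interior_Ioi] at hx
      have hd : HasDerivAt (fun t => t * φ t) (1 * φ x + x * φ' x) x :=
        (hasDerivAt_id x).mul (hderiv x hx)
      rw [hd.deriv]
      have hx' : (0:ℝ) < x := hx
      have h1 := hφ' x hx
      have h2 : (0 : ℝ) < c * x ^ (p - 2) := by positivity
      linarith
  intro u v huv
  by_cases hu : u = 0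
  · subst hu
    have hv : v ≠ 0 := fun h => huv h.symm
    have hvn : (0 : ℝ) < ‖v‖ := norm_pos_iff.mpr hv
    rw [hF v hv, hF0, zero_sub, zero_sub, inner_neg_neg, real_inner_smul_left,
      real_inner_self_eq_norm_sq]
    exact mul_pos (hpos _ hvn) (by positivity)
  by_cases hv : v = 0
  · subst hv
    have hun : (0 : ℝ) < ‖u‖ := norm_pos_iff.mpr hu
    rw [hF u hu, hF0, sub_zero, sub_zero, real_inner_smul_left,
      real_inner_self_eq_norm_sq]
    exact mul_pos (hpos _ hun) (by positivity)
  · have hs : (0 : ℝ) < ‖u‖ := norm_pos_iff.mpr hu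
    have ht : (0 : ℝ) < ‖v‖ := norm_pos_iff.mpr hv
    have hCS : (inner ℝ u v : ℝ) ≤ ‖u‖ * ‖v‖ := real_inner_le_norm u v
    have expand : (inner ℝ (F u - F v) (u - v) : ℝ) =
        φ ‖u‖ * (‖u‖ ^ 2 - inner ℝ u v) + φ ‖v‖ * (‖v‖ ^ 2 - inner ℝ u v) := by
      rw [hF u hu, hF v hv]
      simp only [inner_sub_left, inner_sub_right, real_inner_smul_left,
        real_inner_self_eq_norm_sq, real_inner_comm v u]
      ring
    rw [expand]
    by_cases hst : ‖u‖ = ‖v‖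
    · have hnz : (0 : ℝ) < ‖u - v‖ := by
        rw [norm_pos_iff]; exact sub_ne_zero_of_ne huv
      have hsq : ‖u - v‖ ^ 2 = ‖u‖ ^ 2 - 2 * inner ℝ u v + ‖v‖ ^ 2 :=
        norm_sub_sq_real u v
      have hφs := hpos _ hs
      rw [← hst] at hsq ⊢
      have h3 : 0 < ‖u‖ ^ 2 - inner ℝ u v := by nlinarith [pow_pos hnz 2]
      nlinarith [mul_pos hφs h3]
    · have key : 0 < (‖u‖ * φ ‖u‖ - ‖v‖ * φ ‖v‖) * (‖u‖ - ‖v‖) := by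
        rcases lt_or_gt_of_ne hst with h | h
        · have := amono hs ht h
          simp only at this
          apply mul_pos_of_neg_of_neg <;> linarith
        · have := amono ht hs h
          simp only at this
          apply mul_pos <;> linarith
      have hφs := hpos _ hs
      have hφt := hpos _ ht
      nlinarith
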